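/- Fix a ∈ [1,3] and r ∈ (0,1/16]. There is a constant C > 0 (depending only on a and r) such that the following holds. Let coefficient functions a_k : {−1,1}^k → [1,a] (with a_0 ≡ 1) be given, let n ≥ 1, and suppose there is c_n ∈ ℝ with c_n ≤ g_n(x) ≤ c_n + 2^{−n}(ln a)/2 for all x ∈ K_n. Then for every x₀ ∈ K_n and every y ∈ ℝ² with |y − x₀| = r^{n−1}/2 one has | g̃_n(y) − c_n − 2^{−n} ln(r^{n−1}/2) | ≤ C 2^{−n}, where g̃_n(y) = 2^{−n} Σ_{ε ∈ 𝓔_n} ln|y − f_n(ε)|. -/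
import Mathlib


noncomputable section

/-- The sign `±1 : ℝ` associated to a boolean letter. -/
def sgn (b : Bool) : ℝ := if b then 1 else -1

/-- `f_n(ε) = Σ_{k=1}^{n} (a_{k−1}(ε)/2) r^{k−1} ε_k` (0-based: sum over `k < n`). -/
def fN (r : ℝ) (A : ℕ → (ℕ → Bool) → ℝ) (n : ℕ) (ε : ℕ → Bool) : ℝ :=
  ∑ k ∈ Finset.range n, A k ε / 2 * r ^ k * sgn (ε k)

/-- A word of length `n` (element of `𝓔_n`), extended to an infinite word by `false`. -/
def extWord (n : ℕ) (σ : Fin n → Bool) : ℕ → Bool :=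
  fun k => if h : k < n then σ ⟨k, h⟩ else false

/-- `g_n(x) = 2^{−n} Σ_{x' ∈ K_n, x' ≠ x} ln |x' − x|`, written on the parameter space `𝓔_n`. -/
def gN (r : ℝ) (A : ℕ → (ℕ → Bool) → ℝ) (n : ℕ) (σ : Fin n → Bool) : ℝ :=
  (2 : ℝ)⁻¹ ^ n *
    ∑ σ' ∈ Finset.univ.erase σ, Real.log |fN r A n (extWord n σ') - fN r A n (extWord n σ)|

/-- `g̃_n(y) = 2^{−n} Σ_{x ∈ K_n} ln |y − x|` for `y ∈ ℝ²`, where `ℝ²` is identified with `ℂ`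
and `K_n ⊂ ℝ = ℝ×{0} ⊂ ℂ`. -/
def gTilde (r : ℝ) (A : ℕ → (ℕ → Bool) → ℝ) (n : ℕ) (y : ℂ) : ℝ :=
  (2 : ℝ)⁻¹ ^ n * ∑ σ : Fin n → Bool, Real.log ‖y - (fN r A n (extWord n σ) : ℂ)‖

lemma extWord_lt {n k : ℕ} (σ : Fin n → Bool) (h : k < n) : extWord n σ k = σ ⟨k, h⟩ := by
  simp [extWord, h]

lemma extWord_ge {n k : ℕ} (σ : Fin n → Bool) (h : ¬ k < n) : extWord n σ k = false := by
  simp [extWord, h]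

open Classical in
def fdiff (n : ℕ) (σ₀ σ : Fin n → Bool) : ℕ :=
  if h : ∃ j, extWord n σ j ≠ extWord n σ₀ j then Nat.find h else 0

open Classical in
lemma fdiff_spec (n : ℕ) (σ₀ σ : Fin n → Bool) (hne : σ ≠ σ₀) :
    fdiff n σ₀ σ < n ∧
    extWord n σ (fdiff n σ₀ σ) ≠ extWord n σ₀ (fdiff n σ₀ σ) ∧
    ∀ j < fdiff n σ₀ σ, extWord n σ j = extWord n σ₀ j := by
  have hex : ∃ j, extWord n σ j ≠ extWord n σ₀ j := by
    by_contra h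
    push_neg at h
    apply hne
    funext i
    have := h i.1
    rwa [extWord_lt σ i.isLt, extWord_lt σ₀ i.isLt] at this
  have h1 : fdiff n σ₀ σ = Nat.find hex := dif_pos hex
  have hspec := Nat.find_spec hex
  refine ⟨?_, by rw [h1]; exact hspec, ?_⟩
  · by_contra h
    push_neg at h
    rw [h1] at h
    apply hspec
    rw [extWord_ge σ (by omega), extWord_ge σ₀ (by omega)]
  · intro j hj
    rw [h1] at hj
    have := Nat.find_min hex hj
    simpa using this

lemma fiber_card (n k : ℕ) (σ₀ : Fin n → Bool) :
    ((Finset.univ.erase σ₀).filter (fun σ => fdiff n σ₀ σ = k)).card ≤ 2 ^ (n - 1 - k) := by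
  classical
  have key : ((Finset.univ.erase σ₀).filter (fun σ => fdiff n σ₀ σ = k)).card
      ≤ (Finset.univ : Finset (Fin (n - 1 - k) → Bool)).card := by
    apply Finset.card_le_card_of_injOn
      (fun σ (j : Fin (n - 1 - k)) => σ ⟨k + 1 + j.1, by omega⟩)
    · intro _ _; exact Finset.mem_univ _
    · intro σ₁ h₁ σ₂ h₂ heq
      simp only [Finset.coe_filter, Finset.mem_erase, Set.mem_setOf_eq, Finset.mem_univ,
        true_and, Finset.mem_coe] at h₁ h₂
      obtain ⟨⟨hne₁, -⟩, hk₁⟩ := h₁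
      obtain ⟨⟨hne₂, -⟩, hk₂⟩ := h₂
      obtain ⟨hlt₁, hat₁, hbelow₁⟩ := fdiff_spec n σ₀ σ₁ hne₁
      obtain ⟨hlt₂, hat₂, hbelow₂⟩ := fdiff_spec n σ₀ σ₂ hne₂
      rw [hk₁] at hlt₁ hat₁ hbelow₁
      rw [hk₂] at hlt₂ hat₂ hbelow₂
      funext i
      rcases lt_trichotomy i.1 k with hik | hik | hik
      · have e₁ := hbelow₁ i.1 hik
        have e₂ := hbelow₂ i.1 hik
        rw [extWord_lt σ₁ i.isLt, extWord_lt σ₀ i.isLt] at e₁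
        rw [extWord_lt σ₂ i.isLt, extWord_lt σ₀ i.isLt] at e₂
        rw [e₁, e₂]
      · have e₁ : σ₁ i ≠ σ₀ i := by
          rw [extWord_lt σ₁ hlt₁, extWord_lt σ₀ hlt₁] at hat₁
          have : i = (⟨k, hlt₁⟩ : Fin n) := by apply Fin.ext; exact hik
          rw [this]; exact hat₁
        have e₂ : σ₂ i ≠ σ₀ i := by
          rw [extWord_lt σ₂ hlt₂, extWord_lt σ₀ hlt₂] at hat₂
          have : i = (⟨k, hlt₂⟩ : Fin n) := by apply Fin.ext; exact hik
          rw [this]; exact hat₂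
        revert e₁ e₂
        cases σ₁ i <;> cases σ₂ i <;> cases σ₀ i <;> simp
      · have hj : i.1 - (k + 1) < n - 1 - k := by omega
        have := congrFun heq ⟨i.1 - (k + 1), hj⟩
        simp only at this
        have hidx : (⟨k + 1 + (i.1 - (k + 1)), by omega⟩ : Fin n) = i := by
          apply Fin.ext; simp; omega
        rwa [hidx] at this
  calc _ ≤ _ := key
    _ = 2 ^ (n - 1 - k) := by simp

lemma abs_sgn (b : Bool) : |sgn b| = 1 := by cases b <;> simp [sgn]

lemma geom_bound {r : ℝ} (hr0 : 0 < r) (hr1 : r ≤ 1 / 16) (N : ℕ) :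
    ∑ m ∈ Finset.range N, r ^ m ≤ 16 / 15 := by
  have h1 : (∑ m ∈ Finset.range N, r ^ m) * (r - 1) = r ^ N - 1 := geom_sum_mul r N
  have h2 : (0 : ℝ) ≤ r ^ N := pow_nonneg hr0.le N
  have h3 : (0 : ℝ) ≤ ∑ m ∈ Finset.range N, r ^ m :=
    Finset.sum_nonneg fun m _ => pow_nonneg hr0.le m
  nlinarith

lemma sep {a r : ℝ} (ha1 : 1 ≤ a) (ha3 : a ≤ 3) (hr0 : 0 < r) (hr1 : r ≤ 1 / 16)
    {A : ℕ → (ℕ → Bool) → ℝ}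
    (hA1 : ∀ k ε, 1 ≤ A k ε ∧ A k ε ≤ a)
    (hAc : ∀ k ε ε', (∀ j < k, ε j = ε' j) → A k ε = A k ε')
    {n k : ℕ} (hk : k < n) {e e₀ : ℕ → Bool}
    (hlow : ∀ j < k, e j = e₀ j) (hne : e k ≠ e₀ k) :
    4 / 5 * r ^ k ≤ |fN r A n e - fN r A n e₀| ∧
      |fN r A n e - fN r A n e₀| ≤ 16 / 5 * r ^ k := by
  set t : ℕ → ℝ := fun j => A j e / 2 * r ^ j * sgn (e j) - A j e₀ / 2 * r ^ j * sgn (e₀ j)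
    with ht
  have hdiff : fN r A n e - fN r A n e₀ = ∑ j ∈ Finset.range n, t j := by
    rw [fN, fN, ← Finset.sum_sub_distrib]
  -- terms below k vanish
  have hzero : ∀ j < k, t j = 0 := by
    intro j hj
    have hAe : A j e = A j e₀ := hAc j e e₀ fun i hi => hlow i (lt_trans hi hj)
    simp only [ht, hAe, hlow j hj, sub_self]
  -- split the sum
  have hsplit : ∑ j ∈ Finset.range n, t j = t k + ∑ j ∈ Finset.Ico (k + 1) n, t j := by
    rw [Finset.range_eq_Ico, ← Finset.sum_Ico_consecutive t (Nat.zero_le k) hk.le,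
      Finset.sum_eq_sum_Ico_succ_bot hk t]
    have : ∑ j ∈ Finset.Ico 0 k, t j = 0 :=
      Finset.sum_eq_zero fun j hj => hzero j (Finset.mem_Ico.mp hj).2
    rw [this]; ring
  -- tail bound
  have htail : |∑ j ∈ Finset.Ico (k + 1) n, t j| ≤ 1 / 5 * r ^ k := by
    have h1 : |∑ j ∈ Finset.Ico (k + 1) n, t j| ≤ ∑ j ∈ Finset.Ico (k + 1) n, a * r ^ j := by
      refine (Finset.abs_sum_le_sum_abs _ _).trans (Finset.sum_le_sum fun j _ => ?_)
      have hb : ∀ ε : ℕ → Bool, |A j ε / 2 * r ^ j * sgn (ε j)| ≤ a / 2 * r ^ j := by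
        intro ε
        rw [abs_mul, abs_mul, abs_sgn, mul_one, abs_of_pos (by positivity :
            (0:ℝ) < r ^ j), abs_of_pos (by linarith [(hA1 j ε).1] : (0:ℝ) < A j ε / 2)]
        have := (hA1 j ε).2
        nlinarith [pow_nonneg hr0.le j]
      calc |t j| ≤ |A j e / 2 * r ^ j * sgn (e j)| + |A j e₀ / 2 * r ^ j * sgn (e₀ j)| :=
            abs_sub _ _
        _ ≤ a / 2 * r ^ j + a / 2 * r ^ j := add_le_add (hb e) (hb e₀)
        _ = a * r ^ j := by ring
    have h2 : ∑ j ∈ Finset.Ico (k + 1) n, a * r ^ j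
        = a * (r ^ (k + 1) * ∑ m ∈ Finset.range (n - (k + 1)), r ^ m) := by
      rw [Finset.sum_Ico_eq_sum_range]
      rw [Finset.mul_sum, Finset.mul_sum]
      exact Finset.sum_congr rfl fun m _ => by rw [pow_add]
    have h3 := geom_bound hr0 hr1 (n - (k + 1))
    have h4 : (0:ℝ) ≤ r ^ k := pow_nonneg hr0.le k
    have h5 : r ^ (k + 1) ≤ r ^ k * (1 / 16) := by rw [pow_succ]; nlinarith
    have h6 : (0:ℝ) ≤ ∑ m ∈ Finset.range (n - (k + 1)), r ^ m :=
      Finset.sum_nonneg fun m _ => pow_nonneg hr0.le m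
    have h7 : (0:ℝ) ≤ r ^ (k+1) := pow_nonneg hr0.le (k+1)
    have e1 : r ^ (k + 1) * ∑ m ∈ Finset.range (n - (k + 1)), r ^ m
        ≤ r ^ (k + 1) * (16 / 15) := mul_le_mul_of_nonneg_left h3 h7
    have e2 : a * (r ^ (k + 1) * ∑ m ∈ Finset.range (n - (k + 1)), r ^ m)
        ≤ 3 * (r ^ (k + 1) * (16 / 15)) :=
      mul_le_mul ha3 e1 (mul_nonneg h7 h6) (by norm_num)
    calc |∑ j ∈ Finset.Ico (k + 1) n, t j| ≤ _ := h1
      _ = _ := h2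
      _ ≤ 3 * (r ^ (k + 1) * (16 / 15)) := e2
      _ ≤ 1 / 5 * r ^ k := by linarith
  -- main term
  have hAe : A k e = A k e₀ := hAc k e e₀ hlow
  have hmain : |t k| = A k e * r ^ k := by
    have h4 : (0:ℝ) ≤ r ^ k := pow_nonneg hr0.le k
    have hA := (hA1 k e).1
    have : t k = A k e / 2 * r ^ k * (sgn (e k) - sgn (e₀ k)) := by
      simp only [ht, hAe]; ring
    rw [this]
    have hs : |sgn (e k) - sgn (e₀ k)| = 2 := by
      cases hek : e k <;> cases hek0 : e₀ k
      · exact absurd (hek.trans hek0.symm) hne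
      · norm_num [sgn]
      · norm_num [sgn]
      · exact absurd (hek.trans hek0.symm) hne
    rw [abs_mul, hs, abs_mul, abs_of_nonneg h4,
      abs_of_pos (by linarith : (0:ℝ) < A k e / 2)]
    ring
  have hA1k := (hA1 k e).1
  have hA2k := (hA1 k e).2
  have h4 : (0:ℝ) ≤ r ^ k := pow_nonneg hr0.le k
  have hup : |t k| ≤ 3 * r ^ k := by rw [hmain]; nlinarith
  have hlo : r ^ k ≤ |t k| := by rw [hmain]; nlinarith
  rw [hdiff, hsplit]
  constructor
  · have h8 : |t k| ≤ |t k + ∑ j ∈ Finset.Ico (k + 1) n, t j|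
        + |∑ j ∈ Finset.Ico (k + 1) n, t j| := by
      have := abs_add_le (t k + ∑ j ∈ Finset.Ico (k + 1) n, t j)
        (-(∑ j ∈ Finset.Ico (k + 1) n, t j))
      simpa using this
    linarith
  · calc |t k + ∑ j ∈ Finset.Ico (k + 1) n, t j|
        ≤ |t k| + |∑ j ∈ Finset.Ico (k + 1) n, t j| := abs_add_le _ _
      _ ≤ 16 / 5 * r ^ k := by linarith

lemma logdiff {u v d m : ℝ} (hm : 0 < m) (hu : m ≤ u) (hv : m ≤ v) (hd : |u - v| ≤ d) :
    |Real.log u - Real.log v| ≤ d / m := by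
  have hu0 : 0 < u := lt_of_lt_of_le hm hu
  have hv0 : 0 < v := lt_of_lt_of_le hm hv
  have hd0 : 0 ≤ d := le_trans (abs_nonneg _) hd
  rw [abs_le] at hd ⊢
  constructor
  · have h := Real.log_le_sub_one_of_pos (div_pos hv0 hu0)
    rw [Real.log_div hv0.ne' hu0.ne'] at h
    have h2 : v / u - 1 = (v - u) / u := by field_simp
    have h3 : (v - u) / u ≤ d / m :=
      div_le_div₀ hd0 (by linarith) hm hu
    linarith
  · have h := Real.log_le_sub_one_of_pos (div_pos hu0 hv0)
    rw [Real.log_div hu0.ne' hv0.ne'] at h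
    have h2 : u / v - 1 = (u - v) / v := by field_simp
    have h3 : (u - v) / v ≤ d / m :=
      div_le_div₀ hd0 (by linarith) hm hv
    linarith

lemma geom_bound2 {q : ℝ} (h0 : 0 ≤ q) (h1 : q ≤ 1 / 8) (N : ℕ) :
    ∑ m ∈ Finset.range N, q ^ m ≤ 8 / 7 := by
  have hg : (∑ m ∈ Finset.range N, q ^ m) * (q - 1) = q ^ N - 1 := geom_sum_mul q N
  have h2 : (0 : ℝ) ≤ q ^ N := pow_nonneg h0 N
  have h3 : (0 : ℝ) ≤ ∑ m ∈ Finset.range N, q ^ m :=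
    Finset.sum_nonneg fun m _ => pow_nonneg h0 m
  nlinarith

/-- Fix `a ∈ [1,3]` and `r ∈ (0,1/16]`. There is `C > 0` (depending only on
`a, r`) such that for any admissible coefficients, any `n ≥ 1`, if
`c_n ≤ g_n ≤ c_n + 2^{−n}(ln a)/2` on `K_n`, then for every `x₀ ∈ K_n` and `y ∈ ℝ²` with
`|y − x₀| = r^{n−1}/2` one has `| g̃_n(y) − c_n − 2^{−n} ln(r^{n−1}/2) | ≤ C 2^{−n}`. -/
theorem stmt6 (a r : ℝ) (ha1 : 1 ≤ a) (ha3 : a ≤ 3) (hr0 : 0 < r) (hr1 : r ≤ 1 / 16) :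
    ∃ C : ℝ, 0 < C ∧
      ∀ A : ℕ → (ℕ → Bool) → ℝ,
        (∀ ε, A 0 ε = 1) →
        (∀ k ε, 1 ≤ A k ε ∧ A k ε ≤ a) →
        (∀ k ε ε', (∀ j < k, ε j = ε' j) → A k ε = A k ε') →
      ∀ n : ℕ, 1 ≤ n →
      ∀ c : ℝ,
        (∀ σ : Fin n → Bool,
          c ≤ gN r A n σ ∧ gN r A n σ ≤ c + (2 : ℝ)⁻¹ ^ n * (Real.log a / 2)) →
      ∀ σ₀ : Fin n → Bool, ∀ y : ℂ,
        ‖y - (fN r A n (extWord n σ₀) : ℂ)‖ = r ^ (n - 1) / 2 →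
        |gTilde r A n y - c - (2 : ℝ)⁻¹ ^ n * Real.log (r ^ (n - 1) / 2)|
          ≤ C * (2 : ℝ)⁻¹ ^ n := by
  refine ⟨3, by norm_num, ?_⟩
  intro A hA0 hA1 hAc n hn c hc σ₀ y hy
  classical
  have h2pos : (0 : ℝ) < (2 : ℝ)⁻¹ ^ n := by positivity
  have hrn : (0 : ℝ) < r ^ (n - 1) := pow_pos hr0 _
  -- per-term bound on the log difference
  have key : ∀ σ ∈ Finset.univ.erase σ₀,
      |Real.log ‖y - (fN r A n (extWord n σ) : ℂ)‖ -
        Real.log (|fN r A n (extWord n σ) - fN r A n (extWord n σ₀)|)|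
      ≤ 5 / 3 * r ^ (n - 1 - fdiff n σ₀ σ) := by
    intro σ hσ
    have hne : σ ≠ σ₀ := (Finset.mem_erase.mp hσ).1
    obtain ⟨hklt, hat, hbelow⟩ := fdiff_spec n σ₀ σ hne
    set k := fdiff n σ₀ σ with hk
    set v : ℝ := |fN r A n (extWord n σ) - fN r A n (extWord n σ₀)| with hvdef
    set u : ℝ := ‖y - (fN r A n (extWord n σ) : ℂ)‖ with hudef
    obtain ⟨hv1, hv2⟩ := sep ha1 ha3 hr0 hr1 hA1 hAc hklt hbelow hat
    have hkn : k ≤ n - 1 := by omega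
    have hrk : (0 : ℝ) < r ^ k := pow_pos hr0 k
    have hr_le : r ^ (n - 1) ≤ r ^ k :=
      pow_le_pow_of_le_one hr0.le (by linarith) hkn
    have hnorm : ‖((fN r A n (extWord n σ₀) : ℂ)) - (fN r A n (extWord n σ) : ℂ)‖ = v := by
      rw [← Complex.ofReal_sub, Complex.norm_real, Real.norm_eq_abs, abs_sub_comm]
    have huv : |u - v| ≤ r ^ (n - 1) / 2 := by
      have h := abs_norm_sub_norm_le (y - (fN r A n (extWord n σ) : ℂ))
        ((fN r A n (extWord n σ₀) : ℂ) - (fN r A n (extWord n σ) : ℂ))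
      have h2 : y - (fN r A n (extWord n σ) : ℂ) -
          ((fN r A n (extWord n σ₀) : ℂ) - (fN r A n (extWord n σ) : ℂ))
          = y - (fN r A n (extWord n σ₀) : ℂ) := by ring
      rw [h2, hy, hnorm] at h
      exact h
    have hm : (0 : ℝ) < 3 / 10 * r ^ k := by positivity
    have hvm : 3 / 10 * r ^ k ≤ v := by linarith
    have hum : 3 / 10 * r ^ k ≤ u := by
      have : v - (r ^ (n - 1) / 2) ≤ u := by
        rw [abs_le] at huv; linarith
      linarith
    have hlog := logdiff hm hum hvm huv
    have heq : r ^ (n - 1) / 2 / (3 / 10 * r ^ k) = 5 / 3 * r ^ (n - 1 - k) := by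
      have hpow : r ^ (n - 1) = r ^ k * r ^ (n - 1 - k) := by
        rw [← pow_add]; congr 1; omega
      rw [hpow]
      field_simp
      ring
    rw [heq] at hlog
    exact hlog
  -- sum of per-term bounds
  have hsum : ∑ σ ∈ Finset.univ.erase σ₀,
      |Real.log ‖y - (fN r A n (extWord n σ) : ℂ)‖ -
        Real.log (|fN r A n (extWord n σ) - fN r A n (extWord n σ₀)|)| ≤ 2 := by
    have step1 : ∑ σ ∈ Finset.univ.erase σ₀,
        |Real.log ‖y - (fN r A n (extWord n σ) : ℂ)‖ -
          Real.log (|fN r A n (extWord n σ) - fN r A n (extWord n σ₀)|)|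
        ≤ ∑ σ ∈ Finset.univ.erase σ₀, 5 / 3 * r ^ (n - 1 - fdiff n σ₀ σ) :=
      Finset.sum_le_sum key
    have step2 : ∑ σ ∈ Finset.univ.erase σ₀, 5 / 3 * r ^ (n - 1 - fdiff n σ₀ σ)
        = ∑ k ∈ Finset.range n, ∑ σ ∈ (Finset.univ.erase σ₀).filter
            (fun σ => fdiff n σ₀ σ = k), 5 / 3 * r ^ (n - 1 - fdiff n σ₀ σ) :=
      (Finset.sum_fiberwise_of_maps_to
        (fun σ hσ => Finset.mem_range.mpr
          (fdiff_spec n σ₀ σ (Finset.mem_erase.mp hσ).1).1) _).symm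
    have step3 : ∀ k ∈ Finset.range n,
        ∑ σ ∈ (Finset.univ.erase σ₀).filter (fun σ => fdiff n σ₀ σ = k),
          5 / 3 * r ^ (n - 1 - fdiff n σ₀ σ)
        ≤ (2 : ℝ) ^ (n - 1 - k) * (5 / 3 * r ^ (n - 1 - k)) := by
      intro k _
      have hcongr : ∑ σ ∈ (Finset.univ.erase σ₀).filter (fun σ => fdiff n σ₀ σ = k),
          5 / 3 * r ^ (n - 1 - fdiff n σ₀ σ)
          = ∑ σ ∈ (Finset.univ.erase σ₀).filter (fun σ => fdiff n σ₀ σ = k),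
            5 / 3 * r ^ (n - 1 - k) := by
        refine Finset.sum_congr rfl fun σ hσ => ?_
        rw [(Finset.mem_filter.mp hσ).2]
      rw [hcongr, Finset.sum_const, nsmul_eq_mul]
      have hcard := fiber_card n k σ₀
      have hcard' : (((Finset.univ.erase σ₀).filter
          (fun σ => fdiff n σ₀ σ = k)).card : ℝ) ≤ (2 : ℝ) ^ (n - 1 - k) := by
        calc (((Finset.univ.erase σ₀).filter (fun σ => fdiff n σ₀ σ = k)).card : ℝ)
            ≤ ((2 ^ (n - 1 - k) : ℕ) : ℝ) := Nat.cast_le.mpr hcard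
          _ = (2 : ℝ) ^ (n - 1 - k) := by push_cast; ring
      exact mul_le_mul_of_nonneg_right hcard' (by positivity)
    have step4 : ∑ k ∈ Finset.range n, (2 : ℝ) ^ (n - 1 - k) * (5 / 3 * r ^ (n - 1 - k))
        = 5 / 3 * ∑ k ∈ Finset.range n, (2 * r) ^ (n - 1 - k) := by
      rw [Finset.mul_sum]
      exact Finset.sum_congr rfl fun k _ => by rw [mul_pow]; ring
    have step5 : ∑ k ∈ Finset.range n, (2 * r) ^ (n - 1 - k)
        = ∑ m ∈ Finset.range n, (2 * r) ^ m :=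
      Finset.sum_range_reflect (fun m => (2 * r) ^ m) n
    have step6 : ∑ m ∈ Finset.range n, (2 * r) ^ m ≤ 8 / 7 :=
      geom_bound2 (by linarith) (by linarith) n
    calc _ ≤ _ := step1
      _ = _ := step2
      _ ≤ ∑ k ∈ Finset.range n, (2 : ℝ) ^ (n - 1 - k) * (5 / 3 * r ^ (n - 1 - k)) :=
        Finset.sum_le_sum step3
      _ = 5 / 3 * ∑ k ∈ Finset.range n, (2 * r) ^ (n - 1 - k) := step4
      _ = 5 / 3 * ∑ m ∈ Finset.range n, (2 * r) ^ m := by rw [step5]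
      _ ≤ 2 := by linarith
  -- algebraic decomposition
  have hsplit : gTilde r A n y - c - (2 : ℝ)⁻¹ ^ n * Real.log (r ^ (n - 1) / 2)
      = (2 : ℝ)⁻¹ ^ n * ∑ σ ∈ Finset.univ.erase σ₀,
          (Real.log ‖y - (fN r A n (extWord n σ) : ℂ)‖ -
            Real.log (|fN r A n (extWord n σ) - fN r A n (extWord n σ₀)|))
        + (gN r A n σ₀ - c) := by
    have h1 : (∑ σ : Fin n → Bool, Real.log ‖y - (fN r A n (extWord n σ) : ℂ)‖)
        = Real.log (r ^ (n - 1) / 2)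
          + ∑ σ ∈ Finset.univ.erase σ₀, Real.log ‖y - (fN r A n (extWord n σ) : ℂ)‖ := by
      rw [← Finset.add_sum_erase _ _ (Finset.mem_univ σ₀), hy]
    rw [gTilde, gN, h1, Finset.sum_sub_distrib]
    ring
  have hgN : |gN r A n σ₀ - c| ≤ (2 : ℝ)⁻¹ ^ n := by
    obtain ⟨hcl, hcu⟩ := hc σ₀
    have hla : Real.log a ≤ 2 := by
      have := Real.log_le_sub_one_of_pos (by linarith : (0:ℝ) < a)
      linarith
    have hla0 : 0 ≤ Real.log a := Real.log_nonneg ha1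
    rw [abs_le]
    constructor
    · nlinarith
    · nlinarith
  have habs : |(2 : ℝ)⁻¹ ^ n * ∑ σ ∈ Finset.univ.erase σ₀,
      (Real.log ‖y - (fN r A n (extWord n σ) : ℂ)‖ -
        Real.log (|fN r A n (extWord n σ) - fN r A n (extWord n σ₀)|))|
      ≤ (2 : ℝ)⁻¹ ^ n * 2 := by
    rw [abs_mul, abs_of_pos h2pos]
    refine mul_le_mul_of_nonneg_left ?_ h2pos.le
    exact (Finset.abs_sum_le_sum_abs _ _).trans hsum
  calc |gTilde r A n y - c - (2 : ℝ)⁻¹ ^ n * Real.log (r ^ (n - 1) / 2)|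
      ≤ |(2 : ℝ)⁻¹ ^ n * ∑ σ ∈ Finset.univ.erase σ₀,
          (Real.log ‖y - (fN r A n (extWord n σ) : ℂ)‖ -
            Real.log (|fN r A n (extWord n σ) - fN r A n (extWord n σ₀)|))|
        + |gN r A n σ₀ - c| := by rw [hsplit]; exact abs_add_le _ _
    _ ≤ (2 : ℝ)⁻¹ ^ n * 2 + (2 : ℝ)⁻¹ ^ n := add_le_add habs hgN
    _ = 3 * (2 : ℝ)⁻¹ ^ n := by ring


end
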